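/- Let ε₁,δ₁,…,ε_r,δ_r ∈ {1,−1} (r ≥ 0 arbitrary) and let M = M_{ε₁,δ₁}·…·M_{ε_r,δ_r}. Then for all odd integers m > n > 1 with gcd(m,n) = 1 and every sign ε ∈ {1,−1}, the vector M·(1,0)ᵀ is not equal to (2mn+ε, 2n²)ᵀ. -/

import Mathlib

set_option maxHeartbeats 1600000

/-- The sign function with the convention `sgn 0 = 1`. -/
def sgn (k : ℤ) : ℤ := if k < 0 then -1 else 1

/-- The matrix `M_{k,l} = [[sgn(k)+4|kl|, 2|k|·sgn(l)], [2|l|, sgn(l)]]`. -/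
def M (k l : ℤ) : Matrix (Fin 2) (Fin 2) ℤ :=
  !![sgn k + 4 * |k * l|, 2 * |k| * sgn l; 2 * |l|, sgn l]

/-- Pairs of consecutive values of ±2-sign sequences. -/
inductive SP : ℤ → ℤ → Prop
  | base : SP 0 1
  | step (a b e : ℤ) (he : e = 1 ∨ e = -1) (h : SP a b) : SP b (2*b + e*a)

/-- Indexed form: there is a sequence `Y` with `Y 0 = 0`, `|Y 1| = 1`,
`Y (k+1) = c k * Y k + d k * Y (k-1)` with `c k = ±2`, `d k = ±1`, ending with
`|Y K| = p`, `|Y (K+1)| = q`. -/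
def Succ (p q : ℤ) : Prop :=
  ∃ (K : ℕ) (Y c d : ℕ → ℤ), Y 0 = 0 ∧ (Y 1 = 1 ∨ Y 1 = -1) ∧
    (∀ k, 1 ≤ k → k ≤ K → ((c k = 2 ∨ c k = -2) ∧ (d k = 1 ∨ d k = -1) ∧
      Y (k+1) = c k * Y k + d k * Y (k-1))) ∧ |Y K| = p ∧ |Y (K+1)| = q

lemma mono_aux (K : ℕ) (Y c d : ℕ → ℤ) (h0 : Y 0 = 0) (h1 : Y 1 = 1 ∨ Y 1 = -1)
    (hrec : ∀ k, 1 ≤ k → k ≤ K → ((c k = 2 ∨ c k = -2) ∧ (d k = 1 ∨ d k = -1) ∧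
      Y (k+1) = c k * Y k + d k * Y (k-1))) :
    ∀ k, k ≤ K → |Y k| < |Y (k+1)| := by
  intro k
  induction k with
  | zero =>
    intro _
    rcases h1 with h | h <;> simp [h0, h]
  | succ k ihk =>
    intro hk
    have ih := ihk (by omega)
    obtain ⟨hc, hd, hy⟩ := hrec (k+1) (by omega) hk
    have hsimp : k + 1 - 1 = k := by omega
    rw [hsimp] at hy
    have hcc : |c (k+1) * Y (k+1)| = 2 * |Y (k+1)| := by
      rcases hc with h | h <;> rw [h, abs_mul] <;> norm_num
    have hdd : |d (k+1) * Y k| = |Y k| := by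
      rcases hd with h | h <;> rw [h, abs_mul] <;> norm_num
    have htri : |c (k+1) * Y (k+1)| - |d (k+1) * Y k| ≤ |Y (k+2)| := by
      have := abs_sub_abs_le_abs_sub (c (k+1) * Y (k+1)) (-(d (k+1) * Y k))
      rw [abs_neg, sub_neg_eq_add] at this
      calc |c (k+1) * Y (k+1)| - |d (k+1) * Y k| ≤ |c (k+1) * Y (k+1) + d (k+1) * Y k| := this
        _ = |Y (k+2)| := by rw [← hy]
    rw [hcc, hdd] at htri
    show |Y (k+1)| < |Y (k+2)|
    omega

lemma mono_le (K : ℕ) (Y c d : ℕ → ℤ) (h0 : Y 0 = 0) (h1 : Y 1 = 1 ∨ Y 1 = -1)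
    (hrec : ∀ k, 1 ≤ k → k ≤ K → ((c k = 2 ∨ c k = -2) ∧ (d k = 1 ∨ d k = -1) ∧
      Y (k+1) = c k * Y k + d k * Y (k-1))) :
    ∀ i j, i ≤ j → j ≤ K + 1 → |Y i| ≤ |Y j| := by
  intro i j hij hj
  induction j with
  | zero =>
    have : i = 0 := by omega
    rw [this]
  | succ j ihj =>
    rcases Nat.lt_or_ge i (j+1) with h | h
    · have h1' := ihj (by omega) (by omega)
      have h2 := mono_aux K Y c d h0 h1 hrec j (by omega)
      omega
    · have : i = j + 1 := by omega
      rw [this]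

lemma desc {p q : ℤ} (h : Succ p q) (hp : 1 < p) :
    p < q ∧ q < 3*p ∧ Succ |q - 2*p| p := by
  obtain ⟨K, Y, c, d, h0, h1, hrec, hK, hK1⟩ := h
  have habs1 : |Y 1| = 1 := by rcases h1 with h | h <;> simp [h]
  have hK2 : 2 ≤ K := by
    by_contra hcon
    interval_cases K
    · rw [h0] at hK; simp at hK; omega
    · rw [habs1] at hK; omega
  have hmono := mono_aux K Y c d h0 h1 hrec
  have hpq : p < q := by
    have := hmono K (le_refl K)
    rw [hK, hK1] at this; exact this
  obtain ⟨hc, hd, hy⟩ := hrec K (by omega) (le_refl K)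
  have hq0 : (0:ℤ) ≤ q := hK1 ▸ abs_nonneg _
  have hp0 : (0:ℤ) ≤ p := hK ▸ abs_nonneg _
  have hKm : |Y (K-1)| < p := by
    have := hmono (K-1) (by omega)
    have hind : K - 1 + 1 = K := by omega
    rw [hind, hK] at this; exact this
  have hKm0 : (0:ℤ) ≤ |Y (K-1)| := abs_nonneg _
  -- |Y (K-1)| = |q - 2p|
  have hval : |Y (K-1)| = |q - 2*p| := by
    have heq : |Y (K-1)| = |Y (K+1) - c K * Y K| := by
      have : d K * Y (K-1) = Y (K+1) - c K * Y K := by linarith [hy]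
      calc |Y (K-1)| = |d K * Y (K-1)| := by
            rcases hd with h | h <;> rw [h, abs_mul] <;> norm_num
        _ = |Y (K+1) - c K * Y K| := by rw [this]
    rcases (abs_eq hq0).mp hK1 with hQ | hQ <;> rcases (abs_eq hp0).mp hK with hP | hP <;>
      rcases hc with hC | hC <;> rw [hQ, hP, hC] at heq
    · rw [heq]
    · exfalso
      rw [show q - -2 * p = q + 2*p by ring] at heq
      rw [abs_of_nonneg (by linarith : (0:ℤ) ≤ q + 2*p)] at heq
      omega
    · exfalso
      rw [show q - 2 * -p = q + 2*p by ring] at heq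
      rw [abs_of_nonneg (by linarith : (0:ℤ) ≤ q + 2*p)] at heq
      omega
    · rw [show q - -2 * -p = q - 2*p by ring] at heq
      exact heq
    · exfalso
      rw [show -q - 2 * p = -(q + 2*p) by ring, abs_neg] at heq
      rw [abs_of_nonneg (by linarith : (0:ℤ) ≤ q + 2*p)] at heq
      omega
    · rw [show -q - -2 * p = -(q - 2*p) by ring, abs_neg] at heq
      exact heq
    · rw [show -q - 2 * -p = -(q - 2*p) by ring, abs_neg] at heq
      exact heq
    · exfalso
      rw [show -q - -2 * -p = -(q + 2*p) by ring, abs_neg] at heq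
      rw [abs_of_nonneg (by linarith : (0:ℤ) ≤ q + 2*p)] at heq
      omega
  refine ⟨hpq, ?_, ?_⟩
  · rw [hval] at hKm
    rcases abs_lt.mp hKm with ⟨ha, hb⟩
    omega
  · refine ⟨K-1, Y, c, d, h0, h1, ?_, ?_, ?_⟩
    · intro k hk1 hk2; exact hrec k hk1 (by omega)
    · rw [hval]
    · have hind : K - 1 + 1 = K := by omega
      rw [hind, hK]

lemma succ_zero {q : ℤ} (h : Succ 0 q) : q = 1 := by
  obtain ⟨K, Y, c, d, h0, h1, hrec, hK, hK1⟩ := h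
  have habs1 : |Y 1| = 1 := by rcases h1 with h | h <;> simp [h]
  have hK0 : K = 0 := by
    by_contra hcon
    have := mono_le K Y c d h0 h1 hrec 1 K (by omega) (by omega)
    rw [habs1, hK] at this; omega
  rw [hK0] at hK1; rw [habs1] at hK1; omega

lemma succ_one {q : ℤ} (h : Succ 1 q) : q = 2 := by
  obtain ⟨K, Y, c, d, h0, h1, hrec, hK, hK1⟩ := h
  have habs1 : |Y 1| = 1 := by rcases h1 with h | h <;> simp [h]
  have hK0 : K ≠ 0 := by
    intro hcon; rw [hcon, h0] at hK; simp at hK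
  have habs2 : |Y 2| = 2 := by
    obtain ⟨hc, hd, hy⟩ := hrec 1 (by omega) (by omega)
    simp only [show (1:ℕ) - 1 = 0 from rfl] at hy
    rw [h0] at hy
    have : Y 2 = c 1 * Y 1 := by rw [hy]; ring
    rw [this, abs_mul, habs1]
    rcases hc with h | h <;> rw [h] <;> norm_num
  have hK1' : K = 1 := by
    by_contra hcon
    have h2K : 2 ≤ K := by omega
    have := mono_le K Y c d h0 h1 hrec 2 K (by omega) (by omega)
    rw [habs2, hK] at this; omega
  rw [hK1'] at hK1; rw [habs2] at hK1; omega

/-- Two-term recursion driver. -/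
def pr (cf df : ℕ → ℤ) (a0 a1 : ℤ) : ℕ → ℤ × ℤ
  | 0 => (a0, a1)
  | j+1 => ((pr cf df a0 a1 j).2, df (j+1) * ((pr cf df a0 a1 j).1 - cf (j+1) * (pr cf df a0 a1 j).2))

def sol (cf df : ℕ → ℤ) (a0 a1 : ℤ) (j : ℕ) : ℤ := (pr cf df a0 a1 j).1

lemma sol_zero (cf df : ℕ → ℤ) (a0 a1 : ℤ) : sol cf df a0 a1 0 = a0 := rfl
lemma sol_one (cf df : ℕ → ℤ) (a0 a1 : ℤ) : sol cf df a0 a1 1 = a1 := rfl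
lemma sol_rec (cf df : ℕ → ℤ) (a0 a1 : ℤ) (j : ℕ) :
    sol cf df a0 a1 (j+2) = df (j+1) * (sol cf df a0 a1 j - cf (j+1) * sol cf df a0 a1 (j+1)) := by
  have h1 : sol cf df a0 a1 (j+2) = (pr cf df a0 a1 (j+1)).2 := rfl
  have h2 : sol cf df a0 a1 (j+1) = (pr cf df a0 a1 j).2 := rfl
  rw [h1, h2]
  rfl

/-- The reversal lemma. -/
lemma rev {p q : ℤ} (h : Succ p q) (hp : 1 < p) :
    ∃ ζ β : ℤ, q * ζ + p * β = 1 ∧ |ζ| < p ∧ (ζ + p) % 2 = 1 ∧ (β + p) % 2 = 0 ∧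
      Succ |ζ| p := by
  obtain ⟨K, Y, c, d, h0, h1, hrec, hK, hK1⟩ := h
  have habs1 : |Y 1| = 1 := by rcases h1 with h | h <;> simp [h]
  have hq0 : (0:ℤ) ≤ q := hK1 ▸ abs_nonneg _
  have hp0 : (0:ℤ) ≤ p := hK ▸ abs_nonneg _
  have hK2 : 2 ≤ K := by
    by_contra hcon
    interval_cases K
    · rw [h0] at hK; simp at hK; omega
    · rw [habs1] at hK; omega
  set ch : ℕ → ℤ := fun j => c (K+1-j) with hch
  set dh : ℕ → ℤ := fun j => d (K+1-j) with hdh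
  set B : ℕ → ℤ := sol ch dh 1 0 with hB
  set u : ℕ → ℤ := sol ch dh 0 1 with hu
  have hsr : ∀ j, 1 ≤ j → j ≤ K → ((ch j = 2 ∨ ch j = -2) ∧ (dh j = 1 ∨ dh j = -1)) := by
    intro j hj1 hj2
    have := hrec (K+1-j) (by omega) (by omega)
    exact ⟨this.1, this.2.1⟩
  -- linearity
  have lin : ∀ j, j ≤ K+1 → Y (K+1-j) = Y (K+1) * B j + Y K * u j := by
    intro j
    induction j using Nat.strong_induction_on with
    | _ j ih =>
      match j with
      | 0 =>
        intro _
        have hB0 : B 0 = 1 := sol_zero _ _ _ _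
        have hu0 : u 0 = 0 := sol_zero _ _ _ _
        simp [hB0, hu0]
      | 1 =>
        intro _
        have hB1 : B 1 = 0 := sol_one _ _ _ _
        have hu1 : u 1 = 1 := sol_one _ _ _ _
        have : K + 1 - 1 = K := by omega
        rw [this, hB1, hu1]; ring
      | (j+2) =>
        intro hj
        obtain ⟨hc, hd, hy⟩ := hrec (K-j) (by omega) (by omega)
        have e1 := ih j (by omega) (by omega)
        have e2 := ih (j+1) (by omega) (by omega)
        have i1 : K + 1 - j = (K-j) + 1 := by omega
        have i2 : K + 1 - (j+1) = K - j := by omega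
        have i3 : K + 1 - (j+2) = (K-j) - 1 := by omega
        rw [i1] at e1
        rw [i2] at e2
        rw [i3]
        have hdd : d (K-j) * d (K-j) = 1 := by rcases hd with h | h <;> rw [h] <;> norm_num
        have hstep : Y ((K-j) - 1) = d (K-j) * (Y ((K-j)+1) - c (K-j) * Y (K-j)) := by
          have hyy : Y ((K-j)+1) = c (K-j) * Y (K-j) + d (K-j) * Y ((K-j)-1) := hy
          rcases hd with h | h <;> rw [h] at hyy ⊢ <;> linarith
        have hBrec : B (j+2) = dh (j+1) * (B j - ch (j+1) * B (j+1)) := sol_rec _ _ _ _ _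
        have hurec : u (j+2) = dh (j+1) * (u j - ch (j+1) * u (j+1)) := sol_rec _ _ _ _ _
        have hind : K + 1 - (j+1) = K - j := by omega
        have hch1 : ch (j+1) = c (K-j) := by simp only [hch]; rw [hind]
        have hdh1 : dh (j+1) = d (K-j) := by simp only [hdh]; rw [hind]
        rw [hstep, e1, e2, hBrec, hurec, hch1, hdh1]
        ring
  -- Wronskian
  have wr : ∀ j, j ≤ K → (u j * B (j+1) - u (j+1) * B j = 1 ∨ u j * B (j+1) - u (j+1) * B j = -1) := by
    intro j
    induction j with
    | zero =>
      intro _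
      have hB0 : B 0 = 1 := sol_zero _ _ _ _
      have hu0 : u 0 = 0 := sol_zero _ _ _ _
      have hB1 : B 1 = 0 := sol_one _ _ _ _
      have hu1 : u 1 = 1 := sol_one _ _ _ _
      right; rw [hB0, hu0, hB1, hu1]; ring
    | succ j ihj =>
      intro hj
      show u (j+1) * B (j+2) - u (j+2) * B (j+1) = 1 ∨ u (j+1) * B (j+2) - u (j+2) * B (j+1) = -1
      have ih := ihj (by omega)
      obtain ⟨_, hdh'⟩ := hsr (j+1) (by omega) (by omega)
      have hBrec : B (j+2) = dh (j+1) * (B j - ch (j+1) * B (j+1)) := sol_rec _ _ _ _ _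
      have hurec : u (j+2) = dh (j+1) * (u j - ch (j+1) * u (j+1)) := sol_rec _ _ _ _ _
      have hkey : u (j+1) * B (j+2) - u (j+2) * B (j+1)
          = dh (j+1) * -(u j * B (j+1) - u (j+1) * B j) := by
        rw [hBrec, hurec]; ring
      rcases hdh' with h | h <;> rw [h] at hkey <;> rcases ih with h2 | h2 <;>
        rw [h2] at hkey <;> norm_num at hkey <;> omega
  -- parity of B and u
  have par : ∀ j, j ≤ K+1 → (B j + j + 1) % 2 = 0 ∧ (u j + j) % 2 = 0 := by
    intro j
    induction j using Nat.strong_induction_on with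
    | _ j ih =>
      match j with
      | 0 =>
        intro _
        have hB0 : B 0 = 1 := sol_zero _ _ _ _
        have hu0 : u 0 = 0 := sol_zero _ _ _ _
        rw [hB0, hu0]; omega
      | 1 =>
        intro _
        have hB1 : B 1 = 0 := sol_one _ _ _ _
        have hu1 : u 1 = 1 := sol_one _ _ _ _
        rw [hB1, hu1]; omega
      | (j+2) =>
        intro hj
        have e1 := ih j (by omega) (by omega)
        have e2 := ih (j+1) (by omega) (by omega)
        obtain ⟨hch', hdh'⟩ := hsr (j+1) (by omega) (by omega)
        have hBrec : B (j+2) = dh (j+1) * (B j - ch (j+1) * B (j+1)) := sol_rec _ _ _ _ _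
        have hurec : u (j+2) = dh (j+1) * (u j - ch (j+1) * u (j+1)) := sol_rec _ _ _ _ _
        rcases hch' with h | h <;> rcases hdh' with h2 | h2 <;>
          rw [h, h2] at hBrec hurec <;> rw [hBrec, hurec] <;>
          push_cast <;> omega
  -- monotonicity of |B|
  have monoB : ∀ j, 1 ≤ j → j ≤ K → |B j| < |B (j+1)| := by
    intro j hj1 hj2
    induction j with
    | zero => omega
    | succ j ihj =>
      rcases Nat.eq_zero_or_pos j with hj0 | hjpos
      · subst hj0
        have hB1 : B 1 = 0 := sol_one _ _ _ _
        have hB2 : B 2 = dh 1 * (B 0 - ch 1 * B 1) := sol_rec _ _ _ _ _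
        have hB0 : B 0 = 1 := sol_zero _ _ _ _
        obtain ⟨_, hdh'⟩ := hsr 1 (by omega) (by omega)
        rw [hB0, hB1] at hB2
        show |B 1| < |B 2|
        rcases hdh' with h | h <;> rw [hB1, hB2, h] <;> norm_num
      · have ih := ihj hjpos (by omega)
        obtain ⟨hch', hdh'⟩ := hsr (j+1) (by omega) (by omega)
        have hBrec : B (j+2) = dh (j+1) * (B j - ch (j+1) * B (j+1)) := sol_rec _ _ _ _ _
        have habs : |B (j+2)| = |B j - ch (j+1) * B (j+1)| := by
          rw [hBrec]; rcases hdh' with h | h <;> rw [h, abs_mul] <;> norm_num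
        have hcc : |ch (j+1) * B (j+1)| = 2 * |B (j+1)| := by
          rcases hch' with h | h <;> rw [h, abs_mul] <;> norm_num
        have htri : |ch (j+1) * B (j+1)| - |B j| ≤ |B j - ch (j+1) * B (j+1)| := by
          have := abs_sub_abs_le_abs_sub (ch (j+1) * B (j+1)) (B j)
          rw [abs_sub_comm] at this
          exact this
        rw [hcc] at htri
        show |B (j+1)| < |B (j+2)|
        rw [habs]
        omega
  -- |B (K+1)| = p
  have lK := lin K (by omega)
  have lK1 := lin (K+1) (by omega)
  have iK : K + 1 - K = 1 := by omega
  have iK1 : K + 1 - (K+1) = 0 := by omega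
  rw [iK] at lK
  rw [iK1, h0] at lK1
  have wK := wr K (le_refl K)
  have hBK1 : |B (K+1)| = p := by
    have hkey : B (K+1) * Y 1 = Y K * (u K * B (K+1) - u (K+1) * B K) := by
      linear_combination B (K+1) * lK - B K * lK1
    have : |B (K+1) * Y 1| = |Y K| * |u K * B (K+1) - u (K+1) * B K| := by
      rw [hkey, abs_mul]
    rw [abs_mul, habs1, mul_one, hK] at this
    rcases wK with h | h <;> rw [h] at this <;> simp at this <;> omega
  have hBKlt : |B K| < p := by
    have := monoB K (by omega) (le_refl K)
    rw [hBK1] at this; exact this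
  -- parity of K matches p
  have parY : ∀ k, k ≤ K+1 → (Y k + k) % 2 = 0 := by
    intro k
    induction k using Nat.strong_induction_on with
    | _ k ih =>
      match k with
      | 0 => intro _; rw [h0]; norm_num
      | 1 => intro _; rcases h1 with h | h <;> rw [h] <;> omega
      | (k+2) =>
        intro hk
        have e1 := ih k (by omega) (by omega)
        have e2 := ih (k+1) (by omega) (by omega)
        obtain ⟨hc, hd, hy⟩ := hrec (k+1) (by omega) (by omega)
        have : k + 1 - 1 = k := by omega
        rw [this] at hy
        rcases hc with h | h <;> rcases hd with h2 | h2 <;> rw [h, h2] at hy <;> rw [hy] <;>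
          push_cast <;> omega
  have hKpar : (p + K) % 2 = 0 := by
    have := parY K (by omega)
    have h2 : (0:ℤ) ≤ Y K ∨ Y K < 0 := by omega
    rcases h2 with h2 | h2
    · rw [abs_of_nonneg h2] at hK; omega
    · rw [abs_of_neg h2] at hK; omega
  have parBK := (par K (by omega)).1
  have paruK := (par K (by omega)).2
  -- the Succ witness for the reversed sequence
  have hSuccB : Succ |B K| p := by
    refine ⟨K-1, fun j => B (j+1), fun k2 => -(dh (k2+1) * ch (k2+1)), fun k2 => dh (k2+1),
      sol_one _ _ _ _, ?_, ?_, ?_, ?_⟩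
    · have hB2 : B 2 = dh 1 * (B 0 - ch 1 * B 1) := sol_rec _ _ _ _ _
      have hB0 : B 0 = 1 := sol_zero _ _ _ _
      have hB1 : B 1 = 0 := sol_one _ _ _ _
      obtain ⟨_, hdh'⟩ := hsr 1 (by omega) (by omega)
      rw [hB0, hB1] at hB2
      show B (0 + 1 + 1) = 1 ∨ B (0 + 1 + 1) = -1
      rcases hdh' with h | h <;> rw [h] at hB2 <;> simp at hB2 <;> simp [hB2]
    · intro k2 hk21 hk22
      obtain ⟨hch', hdh'⟩ := hsr (k2+1) (by omega) (by omega)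
      refine ⟨?_, hdh', ?_⟩
      · show -(dh (k2+1) * ch (k2+1)) = 2 ∨ -(dh (k2+1) * ch (k2+1)) = -2
        rcases hch' with h | h <;> rcases hdh' with h2 | h2 <;> rw [h, h2] <;> norm_num
      · have hBrec : B (k2+2) = dh (k2+1) * (B k2 - ch (k2+1) * B (k2+1)) := sol_rec _ _ _ _ _
        have h9 : k2 - 1 + 1 = k2 := by omega
        show B (k2 + 1 + 1) = -(dh (k2+1) * ch (k2+1)) * B (k2 + 1) + dh (k2+1) * B (k2 - 1 + 1)
        rw [h9, hBrec]
        ring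
    · show |B (K - 1 + 1)| = |B K|
      congr 2
      omega
    · show |B (K - 1 + 1 + 1)| = p
      have : K - 1 + 1 + 1 = K + 1 := by omega
      rw [this, hBK1]
  -- assemble ζ and β
  rcases h1 with hY1 | hY1 <;> rcases (abs_eq hq0).mp hK1 with hQ | hQ <;>
    rcases (abs_eq hp0).mp hK with hP | hP <;> rw [hY1, hQ, hP] at lK
  · exact ⟨B K, u K, by linear_combination -lK, hBKlt, by omega, by omega, hSuccB⟩
  · exact ⟨B K, -(u K), by linear_combination -lK, hBKlt, by omega, by omega, hSuccB⟩
  · exact ⟨-(B K), u K, by linear_combination -lK,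
      by rw [abs_neg]; exact hBKlt, by omega, by omega, by rw [abs_neg]; exact hSuccB⟩
  · exact ⟨-(B K), -(u K), by linear_combination -lK,
      by rw [abs_neg]; exact hBKlt, by omega, by omega, by rw [abs_neg]; exact hSuccB⟩
  · exact ⟨-(B K), -(u K), by linear_combination lK,
      by rw [abs_neg]; exact hBKlt, by omega, by omega, by rw [abs_neg]; exact hSuccB⟩
  · exact ⟨-(B K), u K, by linear_combination lK,
      by rw [abs_neg]; exact hBKlt, by omega, by omega, by rw [abs_neg]; exact hSuccB⟩
  · exact ⟨B K, -(u K), by linear_combination lK, hBKlt, by omega, by omega, hSuccB⟩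
  · exact ⟨B K, u K, by linear_combination lK, hBKlt, by omega, by omega, hSuccB⟩

lemma core : ∀ nn : ℕ, ∀ N Mm E : ℤ, N.toNat = nn → 1 < N → Odd N → Odd Mm →
    (E = 1 ∨ E = -1) → Int.gcd Mm N = 1 → ¬ Succ (2*N^2) (2*Mm*N + E) := by
  intro nn
  induction nn using Nat.strong_induction_on with
  | _ nn ih =>
  intro N Mm E hNn hN hoddN hoddM hE hgcd hS
  have hNodd2 : N % 2 = 1 := Int.odd_iff.mp hoddN
  have hModd2 : Mm % 2 = 1 := Int.odd_iff.mp hoddM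
  have hnd : ¬ (N ∣ Mm) := by
    intro hdvd
    have h1 : N ∣ (Int.gcd Mm N : ℤ) := Int.dvd_coe_gcd hdvd dvd_rfl
    rw [hgcd] at h1
    have := Int.le_of_dvd one_pos h1
    omega
  by_cases hN3 : N = 3
  · -- base case N = 3
    subst hN3
    have h18 : (2*(3:ℤ)^2) = 18 := by norm_num
    rw [h18] at hS
    have hM3 : Mm % 3 ≠ 0 := by
      intro h
      exact hnd (Int.dvd_of_emod_eq_zero h)
    obtain ⟨hq1, hq2, hS2⟩ := desc hS (by norm_num)
    have hqval : 2*Mm*3 + E = 29 ∨ 2*Mm*3 + E = 31 ∨ 2*Mm*3 + E = 41 ∨ 2*Mm*3 + E = 43 := by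
      rcases hE with h | h <;> omega
    have habs7 : |(29:ℤ) - 2*18| = 7 := by decide
    have habs7' : |(43:ℤ) - 2*18| = 7 := by decide
    have habs5 : |(31:ℤ) - 2*18| = 5 := by decide
    have habs5' : |(41:ℤ) - 2*18| = 5 := by decide
    have hchain7 : ¬ Succ 7 18 := by
      intro hS3
      obtain ⟨_, _, hS4⟩ := desc hS3 (by norm_num)
      rw [show |(18:ℤ) - 2*7| = 4 by decide] at hS4
      obtain ⟨_, _, hS5⟩ := desc hS4 (by norm_num)
      rw [show |(7:ℤ) - 2*4| = 1 by decide] at hS5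
      have := succ_one hS5
      omega
    have hchain5 : ¬ Succ 5 18 := by
      intro hS3
      obtain ⟨_, hlt, _⟩ := desc hS3 (by norm_num)
      omega
    rcases hqval with h | h | h | h <;> rw [h] at hS2
    · rw [habs7] at hS2; exact hchain7 hS2
    · rw [habs5] at hS2; exact hchain5 hS2
    · rw [habs5'] at hS2; exact hchain5 hS2
    · rw [habs7'] at hS2; exact hchain7 hS2
  · -- main case N ≥ 5
    have hN5 : 5 ≤ N := by omega
    have hNsq : (N:ℤ)^2 = N*N := sq N
    have hp1 : 1 < 2*N^2 := by nlinarith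
    obtain ⟨ζ, β, hB, hζp, hpar1, hpar2, hSv⟩ := rev hS hp1
    have hE2 : E*E = 1 := by rcases hE with h | h <;> rw [h] <;> norm_num
    set R := Mm % N with hR
    have hR0 : 0 ≤ R := Int.emod_nonneg _ (by omega)
    have hRN : R < N := Int.emod_lt_of_pos _ (by omega)
    have hRne : R ≠ 0 := by
      intro h
      exact hnd (Int.dvd_of_emod_eq_zero h)
    set A := Mm / N with hA
    have hMa : N * A + R = Mm := Int.mul_ediv_add_emod Mm N
    have hMm : Mm = N*A + R := by linarith
    have hqq : (2*Mm*N + E) * (2*N*(N-R) + E)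
        = 1 + (2*N^2) * (2*A*N^2 - 2*A*N*R + A*E + 2*N*R - 2*R^2 + E) := by
      rw [hMm]
      linear_combination hE2
    have hcop : IsCoprime (2*N^2 : ℤ) (2*Mm*N + E) := ⟨β, ζ, by linear_combination hB⟩
    have hdvd : (2*N^2 : ℤ) ∣ (ζ - (2*N*(N-R) + E)) := by
      apply hcop.dvd_of_dvd_mul_left
      exact ⟨-(β + (2*A*N^2 - 2*A*N*R + A*E + 2*N*R - 2*R^2 + E)),
        by linear_combination hB - hqq⟩
    have hEb : -1 ≤ E ∧ E ≤ 1 := by rcases hE with h | h <;> rw [h] <;> norm_num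
    have hqbar0 : 0 < 2*N*(N-R) + E := by
      have h1 : (0:ℤ) ≤ 2*N*(N-R-1) := mul_nonneg (by omega) (by omega)
      have h2 : 2*N*(N-R) = 2*N*(N-R-1) + 2*N := by ring
      linarith [hEb.1]
    have hqbarp : 2*N*(N-R) + E < 2*N^2 := by
      have h3 : 2*N^2 - 2*N*(N-R) = 2*N*R := by ring
      have h4 : (0:ℤ) ≤ 2*N*(R-1) := mul_nonneg (by omega) (by omega)
      have h5 : 2*N*R = 2*N*(R-1) + 2*N := by ring
      linarith [hEb.2]
    obtain ⟨t, ht⟩ := hdvd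
    have habslt := abs_lt.mp hζp
    have hT : t = 0 ∨ t = -1 := by
      by_contra hcon
      push_neg at hcon
      obtain ⟨h1', h2'⟩ := hcon
      have h3' : 1 ≤ t ∨ t ≤ -2 := by omega
      have hpnn : (0:ℤ) ≤ 2*N^2 := by positivity
      rcases h3' with h | h
      · have := mul_le_mul_of_nonneg_left h hpnn
        linarith [habslt.2]
      · have := mul_le_mul_of_nonneg_left h hpnn
        linarith [habslt.1]
    have hps : (2*N^2 : ℤ) = 2*(N*N) := by rw [hNsq]
    have hζodd : ζ % 2 = 1 := by
      rw [hps] at hpar1; omega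
    have hβeven : β % 2 = 0 := by
      rw [hps] at hpar2; omega
    set τ := ζ*Mm + N*β with hτdef
    have hτ : 2*N*τ = 1 - E*ζ := by
      rw [hτdef]; linear_combination hB
    have hτodd : Odd τ := by
      have h1 : Odd (ζ*Mm) := (Int.odd_iff.mpr hζodd).mul hoddM
      have h2 : Even (N*β) := (Int.even_iff.mpr hβeven).mul_left N
      exact h1.add_even h2
    -- extract s and σ
    obtain ⟨s, σ, hs1, hsN, hsodd, hσ, hvabs, hsdvd⟩ :
        ∃ s σ : ℤ, 1 ≤ s ∧ s < N ∧ s % 2 = 1 ∧ (σ = 1 ∨ σ = -1) ∧ |ζ| = 2*N*s + σ ∧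
          (∀ x:ℤ, x ∣ N → x ∣ s → x ∣ Mm) := by
      rcases hT with hT | hT
      · -- ζ = qbar, s = N - R
        have hζval : ζ = 2*N*(N-R) + E := by rw [hT] at ht; linarith
        have hτval : τ = -(E*(N-R)) := by
          have h2N : (2*N : ℤ) ≠ 0 := by omega
          apply mul_left_cancel₀ h2N
          linear_combination hτ - E * hζval - hE2
        have hNRodd : (N - R) % 2 = 1 := by
          have hh := Int.odd_iff.mp hτodd
          rw [hτval] at hh
          rcases hE with h | h <;> rw [h] at hh <;> omega
        refine ⟨N - R, E, by omega, by omega, hNRodd, hE, ?_, ?_⟩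
        · rw [hζval]; exact abs_of_pos hqbar0
        · intro x hxN hxs
          have hxR : x ∣ R := by
            have : R = N - (N - R) := by ring
            rw [this]
            exact dvd_sub hxN hxs
          rw [hMm]
          exact dvd_add (Dvd.dvd.mul_right hxN A) hxR
      · -- ζ = qbar - p, s = R
        have hζval : ζ = 2*N*(N-R) + E - 2*N^2 := by rw [hT] at ht; linarith
        have hτval : τ = E*R := by
          have h2N : (2*N : ℤ) ≠ 0 := by omega
          apply mul_left_cancel₀ h2N
          linear_combination hτ - E * hζval - hE2
        have hRodd : R % 2 = 1 := by
          have hh := Int.odd_iff.mp hτodd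
          rw [hτval] at hh
          rcases hE with h | h <;> rw [h] at hh <;> omega
        have hσE : -E = 1 ∨ -E = -1 := by rcases hE with h | h <;> rw [h] <;> norm_num
        refine ⟨R, -E, by omega, hRN, hRodd, hσE, ?_, ?_⟩
        · have hζneg : ζ < 0 := by nlinarith
          rw [abs_of_neg hζneg, hζval]; ring
        · intro x hxN hxs
          rw [hMm]
          exact dvd_add (Dvd.dvd.mul_right hxN A) hxs
    have hσb : -1 ≤ σ ∧ σ ≤ 1 := by rcases hσ with h | h <;> rw [h] <;> norm_num
    have hNs : 2*N*s = 2*(N*s) := by ring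
    have hvodd : (2*N*s + σ) % 2 = 1 := by
      rcases hσ with h | h <;> rw [h, hNs] <;> omega
    have hv1 : 1 < 2*N*s + σ := by
      have h1 : (0:ℤ) ≤ 2*N*(s-1) := mul_nonneg (by omega) (by omega)
      have h2 : 2*N*s = 2*N*(s-1) + 2*N := by ring
      linarith [hσb.1]
    rw [hvabs] at hSv
    obtain ⟨ζ₂, β₂, hB2, hζ2, hpar21, hpar22, hSv2⟩ := rev hSv hv1
    have hσ2 : σ*σ = 1 := by rcases hσ with h | h <;> rw [h] <;> norm_num
    have hcop2 : IsCoprime (2*N*s + σ : ℤ) (2*N^2 : ℤ) := ⟨β₂, ζ₂, by linear_combination hB2⟩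
    have hkey2 : (2*N^2 : ℤ)*(2*s^2) = 1 + (2*N*s+σ)*((2*N*s+σ) - 2*σ) := by
      linear_combination hσ2
    have hdvd2 : (2*N*s + σ : ℤ) ∣ (ζ₂ - 2*s^2) := by
      apply hcop2.dvd_of_dvd_mul_left
      exact ⟨-(β₂ + (2*N*s+σ) - 2*σ), by linear_combination hB2 - hkey2⟩
    have hζ2even : ζ₂ % 2 = 0 := by
      have h8 : (ζ₂ + (2*N*s + σ)) % 2 = 1 := hpar21
      rcases hσ with h | h <;> rw [h, hNs] at h8 <;> omega
    have hs2pos : (0:ℤ) < 2*s^2 := by positivity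
    have hs2lt : 2*s^2 < 2*N*s + σ := by
      have h1 : (0:ℤ) ≤ 2*s*(N-s-1) := mul_nonneg (by omega) (by omega)
      have h2 : 2*N*s - 2*s^2 = 2*s*(N-s-1) + 2*s := by ring
      linarith [hσb.1]
    obtain ⟨t₂, ht₂⟩ := hdvd2
    have habs2 := abs_lt.mp hζ2
    have hss : (s:ℤ)^2 = s*s := sq s
    have ht₂0 : t₂ = 0 := by
      by_contra hcon
      have h3' : 1 ≤ t₂ ∨ t₂ = -1 ∨ t₂ ≤ -2 := by omega
      have hvnn : (0:ℤ) ≤ 2*N*s + σ := by linarith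
      rcases h3' with h | h | h
      · have := mul_le_mul_of_nonneg_left h hvnn
        linarith [habs2.2, hs2pos]
      · rw [h] at ht₂
        have hval : ζ₂ = 2*s^2 - (2*N*s + σ) := by linarith
        rw [hss, hNs] at hval
        rcases hσ with h | h <;> rw [h] at hval <;> omega
      · have := mul_le_mul_of_nonneg_left h hvnn
        linarith [habs2.1, hs2lt]
    have hζ2val : ζ₂ = 2*s^2 := by rw [ht₂0] at ht₂; linarith
    rw [hζ2val, abs_of_pos hs2pos] at hSv2
    by_cases hs1' : s = 1
    · subst hs1'
      obtain ⟨d1, d2, _⟩ := desc hSv2 (by norm_num)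
      rcases hσ with h | h <;> rw [h] at d2 <;> omega
    · have hs3 : 3 ≤ s := by omega
      have hlt : s.toNat < nn := by omega
      have hgcdNs : Int.gcd N s = 1 := by
        have hdvd3 : (Int.gcd N s : ℤ) ∣ Mm :=
          hsdvd _ (Int.gcd_dvd_left _ _) (Int.gcd_dvd_right _ _)
        have hdvd4 : (Int.gcd N s : ℤ) ∣ (Int.gcd Mm N : ℤ) :=
          Int.dvd_coe_gcd hdvd3 (Int.gcd_dvd_left _ _)
        rw [hgcd] at hdvd4
        have h5 : Int.gcd N s ∣ 1 := by
          have : ((Int.gcd N s : ℕ) : ℤ) ∣ ((1:ℕ) : ℤ) := by exact_mod_cast hdvd4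
          exact_mod_cast this
        exact Nat.dvd_one.mp h5
      exact ih s.toNat hlt s N σ rfl (by omega) (Int.odd_iff.mpr hsodd) hoddN hσ hgcdNs hSv2

lemma SP_nonneg {x y : ℤ} (h : SP x y) : 0 ≤ x ∧ x < y := by
  induction h with
  | base => norm_num
  | step a b e he h ih =>
    obtain ⟨h1, h2⟩ := ih
    refine ⟨by omega, ?_⟩
    rcases he with he | he <;> rw [he] <;> omega

lemma SP_succ_aux {x y : ℤ} (h : SP x y) : Succ x y := by
  induction h with
  | base =>
    refine ⟨0, fun j => (j:ℤ), fun _ => 2, fun _ => 1, by norm_num, by norm_num,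
      fun k h1 h2 => absurd h2 (by omega), by norm_num, by norm_num⟩
  | step a b e he h ih =>
    obtain ⟨K, Y, c, d, h0, h1, hrec, hK, hK1⟩ := ih
    obtain ⟨ha0, hab⟩ := SP_nonneg h
    have hb0 : 0 < b := by omega
    set s : ℤ := if Y (K+1) < 0 then -1 else 1 with hs
    set Z : ℕ → ℤ := fun j => s * Y j with hZ
    have hZ0 : Z 0 = 0 := by simp [hZ, h0]
    have hZ1 : Z 1 = 1 ∨ Z 1 = -1 := by
      rcases h1 with h' | h' <;> rw [hZ] <;> simp only [h'] <;> rcases lt_or_ge (Y (K+1)) 0 with hc | hc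
      · right; rw [hs, if_pos hc]; ring
      · left; rw [hs, if_neg (by omega)]; ring
      · left; rw [hs, if_pos hc]; ring
      · right; rw [hs, if_neg (by omega)]; ring
    have hZrec : ∀ k, 1 ≤ k → k ≤ K → ((c k = 2 ∨ c k = -2) ∧ (d k = 1 ∨ d k = -1) ∧
        Z (k+1) = c k * Z k + d k * Z (k-1)) := by
      intro k hk1 hk2
      obtain ⟨hc, hd, hy⟩ := hrec k hk1 hk2
      refine ⟨hc, hd, ?_⟩
      rw [hZ]
      simp only []
      rw [hy]
      ring
    have hZK1 : Z (K+1) = b := by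
      rw [hZ]
      simp only []
      rcases lt_or_ge (Y (K+1)) 0 with hc | hc
      · rw [hs, if_pos hc]
        rw [abs_of_neg hc] at hK1
        linarith
      · rw [hs, if_neg (by omega)]
        rw [abs_of_nonneg hc] at hK1
        linarith
    have hZK : |Z K| = a := by
      rw [hZ]
      simp only []
      rw [abs_mul]
      have habss : |s| = 1 := by
        rcases lt_or_ge (Y (K+1)) 0 with hc | hc
        · rw [hs, if_pos hc]; norm_num
        · rw [hs, if_neg (by omega)]; norm_num
      rw [habss, one_mul, hK]
    have hnew0 : 0 < 2*b + e*a := by rcases he with he | he <;> rw [he] <;> omega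
    rcases (abs_eq ha0).mp hZK with hZKv | hZKv
    · refine ⟨K+1, fun j => if j = K+2 then 2*b + e*a else Z j,
        fun k => if k = K+1 then 2 else c k, fun k => if k = K+1 then e else d k,
        ?_, ?_, ?_, ?_, ?_⟩
      · simp only [if_neg (by omega : ¬ 0 = K+2)]; exact hZ0
      · simp only [if_neg (by omega : ¬ 1 = K+2)]; exact hZ1
      · intro k hk1 hk2
        rcases Nat.lt_or_ge k (K+1) with hlt | hge
        · obtain ⟨hc, hd, hy⟩ := hZrec k hk1 (by omega)
          refine ⟨by simp only [if_neg (by omega : ¬ k = K+1)]; exact hc,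
            by simp only [if_neg (by omega : ¬ k = K+1)]; exact hd, ?_⟩
          simp only [if_neg (by omega : ¬ k+1 = K+2), if_neg (by omega : ¬ k = K+2),
            if_neg (by omega : ¬ k-1 = K+2), if_neg (by omega : ¬ k = K+1)]
          exact hy
        · have hkeq : k = K+1 := by omega
          subst hkeq
          refine ⟨by simp only [if_pos rfl]; left; rfl, by simp only [if_pos rfl]; exact he, ?_⟩
          have hind : K+1-1 = K := by omega
          have hi1 : K+1+1 = K+2 := by omega
          have hi2 : ¬ (K+1 = K+2) := by omega
          have hi3 : ¬ (K = K+2) := by omega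
          have hi4 : K+1 = K+1 := rfl
          simp only [hind, if_pos hi1, if_pos hi4, if_neg hi2, if_neg hi3]
          rw [hZK1, hZKv]
          simp only [if_true]
          try ring
      · simp only [if_neg (by omega : ¬ K+1 = K+2)]
        rw [hZK1]
        exact abs_of_pos hb0
      · simp only [if_pos rfl]
        exact abs_of_pos hnew0
    · refine ⟨K+1, fun j => if j = K+2 then 2*b + e*a else Z j,
        fun k => if k = K+1 then 2 else c k, fun k => if k = K+1 then -e else d k,
        ?_, ?_, ?_, ?_, ?_⟩
      · simp only [if_neg (by omega : ¬ 0 = K+2)]; exact hZ0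
      · simp only [if_neg (by omega : ¬ 1 = K+2)]; exact hZ1
      · intro k hk1 hk2
        rcases Nat.lt_or_ge k (K+1) with hlt | hge
        · obtain ⟨hc, hd, hy⟩ := hZrec k hk1 (by omega)
          refine ⟨by simp only [if_neg (by omega : ¬ k = K+1)]; exact hc,
            by simp only [if_neg (by omega : ¬ k = K+1)]; exact hd, ?_⟩
          simp only [if_neg (by omega : ¬ k+1 = K+2), if_neg (by omega : ¬ k = K+2),
            if_neg (by omega : ¬ k-1 = K+2), if_neg (by omega : ¬ k = K+1)]
          exact hy
        · have hkeq : k = K+1 := by omega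
          subst hkeq
          refine ⟨by simp only [if_pos rfl]; left; rfl,
            by simp only [if_pos rfl]; rcases he with he | he <;> rw [he] <;> norm_num, ?_⟩
          have hind : K+1-1 = K := by omega
          have hi1 : K+1+1 = K+2 := by omega
          have hi2 : ¬ (K+1 = K+2) := by omega
          have hi3 : ¬ (K = K+2) := by omega
          have hi4 : K+1 = K+1 := rfl
          simp only [hind, if_pos hi1, if_pos hi4, if_neg hi2, if_neg hi3]
          rw [hZK1, hZKv]
          simp only [if_true]
          try ring
      · simp only [if_neg (by omega : ¬ K+1 = K+2)]
        rw [hZK1]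
        exact abs_of_pos hb0
      · simp only [if_pos rfl]
        exact abs_of_pos hnew0

lemma mulVec2 (x y z w a b : ℤ) :
    (!![x,y;z,w]).mulVec ![a,b] = ![x*a+y*b, z*a+w*b] := by
  funext i
  fin_cases i <;> simp [Matrix.mulVec, dotProduct, Fin.sum_univ_two]

lemma partI : ∀ r : ℕ, ∀ f g : Fin r → ℤ, (∀ i, f i = 1 ∨ f i = -1) →
    (∀ i, g i = 1 ∨ g i = -1) →
    ∃ a b : ℤ, (List.ofFn fun i => M (f i) (g i)).prod.mulVec ![1, 0] = ![a, b] ∧ SP b a := by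
  intro r
  induction r with
  | zero =>
    intro f g _ _
    refine ⟨1, 0, ?_, SP.base⟩
    simp [List.ofFn_zero, Matrix.one_mulVec]
  | succ r ih =>
    intro f g hf hg
    obtain ⟨a', b', h', hsp⟩ := ih (fun i => f i.succ) (fun i => g i.succ)
      (fun i => hf i.succ) (fun i => hg i.succ)
    have hsplit : (List.ofFn fun i => M (f i) (g i)).prod.mulVec ![1, 0]
        = (M (f 0) (g 0)).mulVec ![a', b'] := by
      rw [List.ofFn_succ, List.prod_cons, ← Matrix.mulVec_mulVec, h']
    rcases hf 0 with hk | hk <;> rcases hg 0 with hl | hl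
    · have hM : M (f 0) (g 0) = !![5, 2; 2, 1] := by
        rw [hk, hl]; unfold M sgn; norm_num
      refine ⟨5*a'+2*b', 2*a'+b', ?_, ?_⟩
      · rw [hsplit, hM, mulVec2]
        funext i
        fin_cases i <;> simp <;> try ring
      · have h1 : SP a' (2*a' + 1*b') := SP.step b' a' 1 (by norm_num) hsp
        have h1' : SP a' (2*a' + b') := by rw [show 2*a' + 1*b' = 2*a'+b' by ring] at h1; exact h1
        have h2 := SP.step a' (2*a'+b') 1 (by norm_num) h1'
        rw [show 2*(2*a'+b') + 1*a' = 5*a'+2*b' by ring] at h2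
        exact h2
    · have hM : M (f 0) (g 0) = !![5, -2; 2, -1] := by
        rw [hk, hl]; unfold M sgn; norm_num
      refine ⟨5*a'-2*b', 2*a'-b', ?_, ?_⟩
      · rw [hsplit, hM, mulVec2]
        funext i
        fin_cases i <;> simp <;> try ring
      · have h1 : SP a' (2*a' + (-1)*b') := SP.step b' a' (-1) (by norm_num) hsp
        have h1' : SP a' (2*a' - b') := by rw [show 2*a' + (-1)*b' = 2*a'-b' by ring] at h1; exact h1
        have h2 := SP.step a' (2*a'-b') 1 (by norm_num) h1'
        rw [show 2*(2*a'-b') + 1*a' = 5*a'-2*b' by ring] at h2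
        exact h2
    · have hM : M (f 0) (g 0) = !![3, 2; 2, 1] := by
        rw [hk, hl]; unfold M sgn; norm_num
      refine ⟨3*a'+2*b', 2*a'+b', ?_, ?_⟩
      · rw [hsplit, hM, mulVec2]
        funext i
        fin_cases i <;> simp <;> try ring
      · have h1 : SP a' (2*a' + 1*b') := SP.step b' a' 1 (by norm_num) hsp
        have h1' : SP a' (2*a' + b') := by rw [show 2*a' + 1*b' = 2*a'+b' by ring] at h1; exact h1
        have h2 := SP.step a' (2*a'+b') (-1) (by norm_num) h1'
        rw [show 2*(2*a'+b') + (-1)*a' = 3*a'+2*b' by ring] at h2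
        exact h2
    · have hM : M (f 0) (g 0) = !![3, -2; 2, -1] := by
        rw [hk, hl]; unfold M sgn; norm_num
      refine ⟨3*a'-2*b', 2*a'-b', ?_, ?_⟩
      · rw [hsplit, hM, mulVec2]
        funext i
        fin_cases i <;> simp <;> try ring
      · have h1 : SP a' (2*a' + (-1)*b') := SP.step b' a' (-1) (by norm_num) hsp
        have h1' : SP a' (2*a' - b') := by rw [show 2*a' + (-1)*b' = 2*a'-b' by ring] at h1; exact h1
        have h2 := SP.step a' (2*a'-b') (-1) (by norm_num) h1'
        rw [show 2*(2*a'-b') + (-1)*a' = 3*a'-2*b' by ring] at h2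
        exact h2

theorem stmt_3 (r : ℕ) (ε' δ : Fin r → ℤ)
    (hε' : ∀ i, ε' i = 1 ∨ ε' i = -1) (hδ : ∀ i, δ i = 1 ∨ δ i = -1)
    (m n : ℤ) (hm : Odd m) (hnodd : Odd n)
    (hmn : m > n) (hn : n > 1) (hgcd : Int.gcd m n = 1)
    (ε : ℤ) (hε : ε = 1 ∨ ε = -1) :
    (List.ofFn fun i => M (ε' i) (δ i)).prod.mulVec ![1, 0] ≠
      ![2 * m * n + ε, 2 * n ^ 2] := by
  intro heq
  obtain ⟨a, b, hab, hsp⟩ := partI r ε' δ hε' hδ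
  rw [hab] at heq
  have ha : a = 2*m*n + ε := by
    have := congrFun heq 0
    simpa using this
  have hb : b = 2*n^2 := by
    have := congrFun heq 1
    simpa using this
  rw [ha, hb] at hsp
  have hsucc : Succ (2*n^2) (2*m*n + ε) := SP_succ_aux hsp
  exact core n.toNat n m ε rfl hn hnodd hm hε hgcd hsucc
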